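/- The stochastic dynamics equation implies the Klein–Gordon equation: with V^μ(x) = (1/m₀)[iℏ∂^μ ln φ + eA^μ], V̂^μ := V^μ + i(λ²/2)∂^μ, D_τ := V̂^μ∂_μ and λ² = ℏ/m₀, one has the identity m₀D_τV^μ + e V̂_ν F^{μν} = (1/2)∂^μ[ (iℏ∂_ν + eA_ν)(iℏ∂^ν + eA^ν)φ / (m₀ φ) ], where F^{μν} = ∂^μA^ν − ∂^νA^μ; in particular, if φ satisfies the Klein–Gordon equation (iℏ∂_ν + eA_ν)(iℏ∂^ν + eA^ν)φ = m₀²c²φ, then m₀D_τV^μ = −e V̂_ν F^{μν}. -/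

import Mathlib

/-- Partial derivative `∂_μ f` of a complex-valued function on `ℝ⁴`. -/
noncomputable def pdC (i : Fin 4) (f : (Fin 4 → ℝ) → ℂ) (x : Fin 4 → ℝ) : ℂ :=
  fderiv ℝ f x (Pi.single i 1)

/-- Partial derivative `∂_μ f` of a real-valued function on `ℝ⁴`. -/
noncomputable def pdR (i : Fin 4) (f : (Fin 4 → ℝ) → ℝ) (x : Fin 4 → ℝ) : ℝ :=
  fderiv ℝ f x (Pi.single i 1)

/-- Metric signs of `g = diag(+1,−1,−1,−1)`. -/
def mink (i : Fin 4) : ℝ := if i = 0 then 1 else -1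

/-- The complex d'Alembertian `∂_μ∂^μ f`. -/
noncomputable def boxC (f : (Fin 4 → ℝ) → ℂ) (x : Fin 4 → ℝ) : ℂ :=
  ∑ μ : Fin 4, (mink μ : ℂ) * pdC μ (pdC μ f) x

/-- Complex velocity `V^μ = (1/m₀)[iℏ ∂^μ ln φ + e A^μ]` for nowhere-vanishing `φ`
(`∂^μ ln φ = ∂^μ φ / φ`). -/
noncomputable def VelPhi (m0 hbar e : ℝ) (φ : (Fin 4 → ℝ) → ℂ)
    (A : Fin 4 → (Fin 4 → ℝ) → ℝ) (μ : Fin 4) (x : Fin 4 → ℝ) : ℂ :=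
  (1 / m0) * (Complex.I * hbar * ((mink μ : ℂ) * pdC μ φ x / φ x) + e * A μ x)

/-- `iℏD_ν ψ = (iℏ∂_ν + eA_ν)ψ`, with `A_ν = g_{νρ}A^ρ`. -/
noncomputable def opLow (hbar e : ℝ) (A : Fin 4 → (Fin 4 → ℝ) → ℝ) (ν : Fin 4)
    (ψ : (Fin 4 → ℝ) → ℂ) (x : Fin 4 → ℝ) : ℂ :=
  Complex.I * hbar * pdC ν ψ x + e * ((mink ν * A ν x : ℝ) : ℂ) * ψ x

/-- `(iℏD_μ)(iℏD^μ)ψ = (iℏ∂_ν + eA_ν)(iℏ∂^ν + eA^ν)ψ`. -/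
noncomputable def KGop (hbar e : ℝ) (A : Fin 4 → (Fin 4 → ℝ) → ℝ)
    (ψ : (Fin 4 → ℝ) → ℂ) (x : Fin 4 → ℝ) : ℂ :=
  ∑ ν : Fin 4, (mink ν : ℂ) * opLow hbar e A ν (fun y => opLow hbar e A ν ψ y) x

/-- Field tensor `F^{μν} = ∂^μ A^ν − ∂^ν A^μ`. -/
noncomputable def Ften (A : Fin 4 → (Fin 4 → ℝ) → ℝ) (μ ν : Fin 4) (x : Fin 4 → ℝ) : ℝ :=
  mink μ * pdR μ (A ν) x - mink ν * pdR ν (A μ) x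

/-- `D_τ g = V̂^μ ∂_μ g = V^μ ∂_μ g + i(λ²/2) ∂^μ∂_μ g`. -/
noncomputable def Dtau (m0 hbar e lam : ℝ) (φ : (Fin 4 → ℝ) → ℂ)
    (A : Fin 4 → (Fin 4 → ℝ) → ℝ) (g : (Fin 4 → ℝ) → ℂ) (x : Fin 4 → ℝ) : ℂ :=
  (∑ μ : Fin 4, VelPhi m0 hbar e φ A μ x * pdC μ g x)
    + Complex.I * ((lam ^ 2 / 2 : ℝ) : ℂ) * boxC g x

/-- `V̂_ν F^{μν} = V_ν F^{μν} + i(λ²/2) ∂_ν F^{μν}`. -/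
noncomputable def VhatF (m0 hbar e lam : ℝ) (φ : (Fin 4 → ℝ) → ℂ)
    (A : Fin 4 → (Fin 4 → ℝ) → ℝ) (μ : Fin 4) (x : Fin 4 → ℝ) : ℂ :=
  (∑ ν : Fin 4, (mink ν : ℂ) * VelPhi m0 hbar e φ A ν x * ((Ften A μ ν x : ℝ) : ℂ))
    + Complex.I * ((lam ^ 2 / 2 : ℝ) : ℂ) *
        ((∑ ν : Fin 4, pdR ν (fun y => Ften A μ ν y) x : ℝ) : ℂ)

section Stmt17Aux

open Complex Finset

variable {i j μ ν : Fin 4} {x : Fin 4 → ℝ} {f g : (Fin 4 → ℝ) → ℂ}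

lemma mink_cases (i : Fin 4) : mink i = 1 ∨ mink i = -1 := by
  unfold mink; split <;> simp

lemma pdC_congr (h : ∀ y, f y = g y) : pdC i f x = pdC i g x := by
  have : f = g := funext h
  rw [this]

lemma pdC_add (hf : DifferentiableAt ℝ f x) (hg : DifferentiableAt ℝ g x) :
    pdC i (fun y => f y + g y) x = pdC i f x + pdC i g x := by
  unfold pdC; rw [fderiv_fun_add hf hg]; simp

lemma pdC_sub (hf : DifferentiableAt ℝ f x) (hg : DifferentiableAt ℝ g x) :
    pdC i (fun y => f y - g y) x = pdC i f x - pdC i g x := by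
  unfold pdC; rw [fderiv_fun_sub hf hg]; simp

lemma pdC_const (c : ℂ) : pdC i (fun _ => c) x = 0 := by
  unfold pdC; simp

lemma pdC_const_mul (hf : DifferentiableAt ℝ f x) (c : ℂ) :
    pdC i (fun y => c * f y) x = c * pdC i f x := by
  unfold pdC; rw [fderiv_const_mul hf]; simp

lemma pdC_mul (hf : DifferentiableAt ℝ f x) (hg : DifferentiableAt ℝ g x) :
    pdC i (fun y => f y * g y) x = f x * pdC i g x + g x * pdC i f x := by
  unfold pdC; rw [fderiv_fun_mul hf hg]; simp

lemma pdC_sum {F : Fin 4 → (Fin 4 → ℝ) → ℂ} (hf : ∀ ν, DifferentiableAt ℝ (F ν) x) :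
    pdC i (fun y => ∑ ν : Fin 4, F ν y) x = ∑ ν : Fin 4, pdC i (F ν) x := by
  unfold pdC; rw [fderiv_fun_sum fun ν _ => hf ν]; simp

lemma pdC_inv (hg : DifferentiableAt ℝ g x) (h0 : ∀ y, g y ≠ 0) :
    pdC i (fun y => (g y)⁻¹) x = -pdC i g x / (g x) ^ 2 := by
  have hinv : DifferentiableAt ℝ (fun y => (g y)⁻¹) x := hg.inv (h0 x)
  have h1 : pdC i (fun y => g y * (g y)⁻¹) x = 0 := by
    rw [pdC_congr (g := fun _ => (1 : ℂ)) (fun y => mul_inv_cancel₀ (h0 y)), pdC_const]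
  rw [pdC_mul hg hinv] at h1
  have hx2 : (g x) ^ 2 ≠ 0 := pow_ne_zero _ (h0 x)
  have h2 : g x * (g x)⁻¹ = 1 := mul_inv_cancel₀ (h0 x)
  rw [eq_div_iff hx2]
  linear_combination (g x) * h1 - pdC i g x * h2

lemma pdC_div (hf : DifferentiableAt ℝ f x) (hg : DifferentiableAt ℝ g x) (h0 : ∀ y, g y ≠ 0) :
    pdC i (fun y => f y / g y) x
      = (pdC i f x * g x - f x * pdC i g x) / (g x) ^ 2 := by
  have hinv : DifferentiableAt ℝ (fun y => (g y)⁻¹) x := hg.inv (h0 x)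
  rw [pdC_congr (g := fun y => f y * (g y)⁻¹) (fun y => div_eq_mul_inv _ _),
    pdC_mul hf hinv, pdC_inv hg h0]
  have h2 : (g x)⁻¹ = g x / (g x) ^ 2 := by
    rw [pow_two]; field_simp
  rw [h2]
  field_simp
  ring

lemma pdC_ofReal {g : (Fin 4 → ℝ) → ℝ} (hg : DifferentiableAt ℝ g x) :
    pdC i (fun y => ((g y : ℝ) : ℂ)) x = pdR i g x := by
  unfold pdC pdR
  have h : fderiv ℝ (fun y => ((g y : ℝ) : ℂ)) x = Complex.ofRealCLM.comp (fderiv ℝ g x) :=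
    (Complex.ofRealCLM.hasFDerivAt.comp x hg.hasFDerivAt).fderiv
  rw [h]
  simp

lemma pdR_const_mul {g : (Fin 4 → ℝ) → ℝ} (hg : DifferentiableAt ℝ g x) (c : ℝ) :
    pdR i (fun y => c * g y) x = c * pdR i g x := by
  unfold pdR; rw [fderiv_const_mul hg]; simp

end Stmt17Aux
section Stmt17Aux2

open Complex Finset

lemma contDiff_pdC {n : ℕ} {f : (Fin 4 → ℝ) → ℂ} (hf : ContDiff ℝ (n + 1) f) (i : Fin 4) :
    ContDiff ℝ n (fun x => pdC i f x) := by
  have h1 : ContDiff ℝ n (fun x => fderiv ℝ f x) :=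
    hf.fderiv_right (by exact_mod_cast le_refl ((n : ℕ∞) + 1))
  exact h1.clm_apply contDiff_const

lemma contDiff_pdR {n : ℕ} {f : (Fin 4 → ℝ) → ℝ} (hf : ContDiff ℝ (n + 1) f) (i : Fin 4) :
    ContDiff ℝ n (fun x => pdR i f x) := by
  have h1 : ContDiff ℝ n (fun x => fderiv ℝ f x) :=
    hf.fderiv_right (by exact_mod_cast le_refl ((n : ℕ∞) + 1))
  exact h1.clm_apply contDiff_const

lemma pdC_comm {f : (Fin 4 → ℝ) → ℂ} (hf : ContDiff ℝ 2 f) (i j : Fin 4) (x : Fin 4 → ℝ) :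
    pdC i (pdC j f) x = pdC j (pdC i f) x := by
  have hsymm : IsSymmSndFDerivAt ℝ f x := hf.contDiffAt.isSymmSndFDerivAt (by norm_num)
  have hdf : DifferentiableAt ℝ (fderiv ℝ f) x := by
    have h1 : ContDiff ℝ 1 (fun x => fderiv ℝ f x) :=
      hf.fderiv_right (by exact_mod_cast le_refl ((1 : ℕ∞) + 1))
    exact (h1.differentiable (by norm_num)).differentiableAt
  have key : ∀ v w : Fin 4 → ℝ,
      fderiv ℝ (fun y => fderiv ℝ f y v) x w = fderiv ℝ (fderiv ℝ f) x w v := by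
    intro v w
    rw [fderiv_clm_apply hdf (differentiableAt_const v)]
    simp
  show fderiv ℝ (fun y => fderiv ℝ f y (Pi.single j 1)) x (Pi.single i 1)
      = fderiv ℝ (fun y => fderiv ℝ f y (Pi.single i 1)) x (Pi.single j 1)
  rw [key, key, hsymm.eq]

end Stmt17Aux2
section Stmt17Aux3

open Complex Finset

variable {m0 hbar e : ℝ} {φ : (Fin 4 → ℝ) → ℂ} {A : Fin 4 → (Fin 4 → ℝ) → ℝ}

lemma hφ2 (hφ : ContDiff ℝ 3 φ) : ContDiff ℝ (2 + 1 : ℕ) φ := by exact_mod_cast hφ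

lemma contDiff_Vel (hφ : ContDiff ℝ 3 φ) (hφ0 : ∀ x, φ x ≠ 0)
    (hA : ∀ μ, ContDiff ℝ 2 (A μ)) (ν : Fin 4) :
    ContDiff ℝ 2 (fun y => VelPhi m0 hbar e φ A ν y) := by
  have h1 : ContDiff ℝ 2 (fun y => pdC ν φ y) := contDiff_pdC (n := 2) (hφ2 hφ) ν
  have hinv : ContDiff ℝ 2 (fun y => (φ y)⁻¹) := (hφ.of_le (by norm_num)).inv hφ0
  have hAc : ContDiff ℝ 2 (fun y => ((A ν y : ℝ) : ℂ)) :=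
    Complex.ofRealCLM.contDiff.comp (hA ν)
  unfold VelPhi
  simp only [div_eq_mul_inv]
  apply ContDiff.mul contDiff_const
  apply ContDiff.add
  · exact contDiff_const.mul ((contDiff_const.mul h1).mul hinv)
  · exact contDiff_const.mul hAc

lemma pdC_Vel (hφ : ContDiff ℝ 3 φ) (hφ0 : ∀ x, φ x ≠ 0)
    (hA : ∀ μ, ContDiff ℝ 2 (A μ)) (μ ν : Fin 4) (x : Fin 4 → ℝ) :
    pdC μ (fun y => VelPhi m0 hbar e φ A ν y) x
      = (1 / m0 : ℂ) * (Complex.I * hbar * (mink ν : ℂ) *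
          (pdC μ (pdC ν φ) x / φ x - pdC ν φ x * pdC μ φ x / (φ x) ^ 2)
          + e * pdR μ (A ν) x) := by
  have dφ : DifferentiableAt ℝ φ x := (hφ.differentiable (by norm_num)).differentiableAt
  have dp : DifferentiableAt ℝ (pdC ν φ) x :=
    ((contDiff_pdC (n := 2) (hφ2 hφ) ν).differentiable (by norm_num)).differentiableAt
  have dA : DifferentiableAt ℝ (A ν) x :=
    ((hA ν).differentiable (by norm_num)).differentiableAt
  have dAc : DifferentiableAt ℝ (fun y => ((A ν y : ℝ) : ℂ)) x :=
    (Complex.ofRealCLM.differentiable.comp ((hA ν).differentiable (by norm_num))).differentiableAt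
  have dcp : DifferentiableAt ℝ (fun y => (mink ν : ℂ) * pdC ν φ y) x := dp.const_mul _
  have dX : DifferentiableAt ℝ (fun y => (mink ν : ℂ) * pdC ν φ y / φ y) x := by
    have heq : (fun y => (mink ν : ℂ) * pdC ν φ y / φ y)
        = fun y => (mink ν : ℂ) * pdC ν φ y * (φ y)⁻¹ := by
      funext y; rw [div_eq_mul_inv]
    rw [heq]
    exact dcp.mul (dφ.inv (hφ0 x))
  unfold VelPhi
  rw [pdC_const_mul (((dX.const_mul _).fun_add (dAc.const_mul _))) _,
    pdC_add (dX.const_mul _) (dAc.const_mul _),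
    pdC_const_mul dX _, pdC_const_mul dAc _,
    pdC_div dcp dφ hφ0, pdC_const_mul dp _, pdC_ofReal dA]
  have h2 : φ x * (φ x)⁻¹ ^ 2 = (φ x)⁻¹ := by
    rw [pow_two, ← mul_assoc, mul_inv_cancel₀ (hφ0 x), one_mul]
  field_simp

end Stmt17Aux3
section Stmt17Aux4

open Complex Finset

variable {m0 hbar e : ℝ} {φ : (Fin 4 → ℝ) → ℂ} {A : Fin 4 → (Fin 4 → ℝ) → ℝ}

lemma curl_Vel (hφ : ContDiff ℝ 3 φ) (hφ0 : ∀ x, φ x ≠ 0)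
    (hA : ∀ μ, ContDiff ℝ 2 (A μ)) (hm0 : m0 ≠ 0) (μ ν : Fin 4) (x : Fin 4 → ℝ) :
    (e : ℂ) * ((Ften A μ ν x : ℝ) : ℂ)
      = (m0 : ℂ) * ((mink μ : ℂ) * pdC μ (fun y => VelPhi m0 hbar e φ A ν y) x
          - (mink ν : ℂ) * pdC ν (fun y => VelPhi m0 hbar e φ A μ y) x) := by
  rw [pdC_Vel hφ hφ0 hA μ ν x, pdC_Vel hφ hφ0 hA ν μ x]
  have hsym : pdC μ (pdC ν φ) x = pdC ν (pdC μ φ) x :=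
    pdC_comm (hφ.of_le (by norm_num)) μ ν x
  unfold Ften
  push_cast
  have hm0' : (m0 : ℂ) ≠ 0 := Complex.ofReal_ne_zero.mpr hm0
  rw [hsym]
  field_simp
  ring

lemma diff_Vel (hφ : ContDiff ℝ 3 φ) (hφ0 : ∀ x, φ x ≠ 0)
    (hA : ∀ μ, ContDiff ℝ 2 (A μ)) (ν : Fin 4) (x : Fin 4 → ℝ) :
    DifferentiableAt ℝ (fun y => VelPhi m0 hbar e φ A ν y) x :=
  ((contDiff_Vel hφ hφ0 hA ν).differentiable (by norm_num)).differentiableAt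

lemma diff_pdC_Vel (hφ : ContDiff ℝ 3 φ) (hφ0 : ∀ x, φ x ≠ 0)
    (hA : ∀ μ, ContDiff ℝ 2 (A μ)) (μ ν : Fin 4) (x : Fin 4 → ℝ) :
    DifferentiableAt ℝ (pdC μ (fun y => VelPhi m0 hbar e φ A ν y)) x := by
  have h : ContDiff ℝ (1 + 1 : ℕ) (fun y => VelPhi m0 hbar e φ A ν y) := by
    exact_mod_cast contDiff_Vel hφ hφ0 hA ν
  exact ((contDiff_pdC (n := 1) h μ).differentiable (by norm_num)).differentiableAt

lemma divF_Vel (hφ : ContDiff ℝ 3 φ) (hφ0 : ∀ x, φ x ≠ 0)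
    (hA : ∀ μ, ContDiff ℝ 2 (A μ)) (hm0 : m0 ≠ 0) (μ ν : Fin 4) (x : Fin 4 → ℝ) :
    (e : ℂ) * ((pdR ν (fun y => Ften A μ ν y) x : ℝ) : ℂ)
      = (m0 : ℂ) * ((mink μ : ℂ) * pdC μ (pdC ν (fun y => VelPhi m0 hbar e φ A ν y)) x
          - (mink ν : ℂ) * pdC ν (pdC ν (fun y => VelPhi m0 hbar e φ A μ y)) x) := by
  have hA1 : ∀ ρ σ : Fin 4, DifferentiableAt ℝ (fun y => pdR ρ (A σ) y) x := by
    intro ρ σ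
    have h : ContDiff ℝ (1 + 1 : ℕ) (A σ) := by exact_mod_cast hA σ
    exact ((contDiff_pdR (n := 1) h ρ).differentiable (by norm_num)).differentiableAt
  have dF : DifferentiableAt ℝ (fun y => Ften A μ ν y) x := by
    unfold Ften
    exact ((hA1 μ ν).const_mul _).sub ((hA1 ν μ).const_mul _)
  have dFc : DifferentiableAt ℝ (fun y => ((Ften A μ ν y : ℝ) : ℂ)) x :=
    (Complex.ofRealCLM.differentiable.differentiableAt).comp x dF
  have step1 : (e : ℂ) * ((pdR ν (fun y => Ften A μ ν y) x : ℝ) : ℂ)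
      = pdC ν (fun y => (e : ℂ) * ((Ften A μ ν y : ℝ) : ℂ)) x := by
    rw [pdC_const_mul dFc, pdC_ofReal dF]
  rw [step1,
    pdC_congr (fun y => curl_Vel hφ hφ0 hA hm0 μ ν y)]
  have d1 : DifferentiableAt ℝ
      (fun y => (mink μ : ℂ) * pdC μ (fun z => VelPhi m0 hbar e φ A ν z) y) x :=
    (diff_pdC_Vel hφ hφ0 hA μ ν x).const_mul _
  have d2 : DifferentiableAt ℝ
      (fun y => (mink ν : ℂ) * pdC ν (fun z => VelPhi m0 hbar e φ A μ z) y) x :=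
    (diff_pdC_Vel hφ hφ0 hA ν μ x).const_mul _
  rw [pdC_const_mul (d1.fun_sub d2), pdC_sub d1 d2,
    pdC_const_mul (diff_pdC_Vel hφ hφ0 hA μ ν x),
    pdC_const_mul (diff_pdC_Vel hφ hφ0 hA ν μ x)]
  have hsym : pdC ν (pdC μ (fun y => VelPhi m0 hbar e φ A ν y)) x
      = pdC μ (pdC ν (fun y => VelPhi m0 hbar e φ A ν y)) x :=
    pdC_comm (contDiff_Vel hφ hφ0 hA ν) ν μ x
  rw [hsym]

end Stmt17Aux4
section Stmt17Aux5

open Complex Finset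

variable {m0 hbar e : ℝ} {φ : (Fin 4 → ℝ) → ℂ} {A : Fin 4 → (Fin 4 → ℝ) → ℝ}

lemma KG_term (hφ : ContDiff ℝ 3 φ) (hφ0 : ∀ x, φ x ≠ 0)
    (hA : ∀ μ, ContDiff ℝ 2 (A μ)) (hm0 : m0 ≠ 0) (ν : Fin 4) (x : Fin 4 → ℝ) :
    (mink ν : ℂ) * opLow hbar e A ν (fun y => opLow hbar e A ν φ y) x
      = ((m0 : ℂ) * φ x) *
          ((m0 : ℂ) * ((mink ν : ℂ) *
              (VelPhi m0 hbar e φ A ν x * VelPhi m0 hbar e φ A ν x))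
            + Complex.I * (hbar : ℂ) * pdC ν (fun y => VelPhi m0 hbar e φ A ν y) x) := by
  have dφ : DifferentiableAt ℝ φ x := (hφ.differentiable (by norm_num)).differentiableAt
  have dp : DifferentiableAt ℝ (pdC ν φ) x :=
    ((contDiff_pdC (n := 2) (hφ2 hφ) ν).differentiable (by norm_num)).differentiableAt
  have dA : DifferentiableAt ℝ (A ν) x :=
    ((hA ν).differentiable (by norm_num)).differentiableAt
  have daR : DifferentiableAt ℝ (fun y => mink ν * A ν y) x := dA.const_mul _
  have daC : DifferentiableAt ℝ (fun y => ((mink ν * A ν y : ℝ) : ℂ)) x :=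
    (Complex.ofRealCLM.differentiable.differentiableAt).comp x daR
  have deaC : DifferentiableAt ℝ (fun y => (e : ℂ) * ((mink ν * A ν y : ℝ) : ℂ)) x :=
    daC.const_mul _
  have hop : pdC ν (fun y => opLow hbar e A ν φ y) x
      = Complex.I * (hbar : ℂ) * pdC ν (pdC ν φ) x
        + ((e : ℂ) * ((mink ν * A ν x : ℝ) : ℂ)) * pdC ν φ x
        + φ x * ((e : ℂ) * ((mink ν * pdR ν (A ν) x : ℝ) : ℂ)) := by
    have heq : (fun y => opLow hbar e A ν φ y)
        = fun y => Complex.I * (hbar : ℂ) * pdC ν φ y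
            + ((e : ℂ) * ((mink ν * A ν y : ℝ) : ℂ)) * φ y := rfl
    rw [heq, pdC_add (dp.const_mul _) (deaC.fun_mul dφ), pdC_const_mul dp,
      pdC_mul deaC dφ, pdC_const_mul daC, pdC_ofReal daR, pdR_const_mul dA]
    ring
  have houter : opLow hbar e A ν (fun y => opLow hbar e A ν φ y) x
      = Complex.I * (hbar : ℂ) * pdC ν (fun y => opLow hbar e A ν φ y) x
        + (e : ℂ) * ((mink ν * A ν x : ℝ) : ℂ) * opLow hbar e A ν φ x := rfl
  have hinner : opLow hbar e A ν φ x
      = Complex.I * (hbar : ℂ) * pdC ν φ x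
        + (e : ℂ) * ((mink ν * A ν x : ℝ) : ℂ) * φ x := rfl
  have hm0' : (m0 : ℂ) ≠ 0 := Complex.ofReal_ne_zero.mpr hm0
  rw [houter, hop, hinner, pdC_Vel hφ hφ0 hA ν ν x]
  unfold VelPhi
  rcases mink_cases ν with h | h <;> rw [h] <;> push_cast <;>
    field_simp [hφ0 x, hm0'] <;> ring

lemma KG_Vel (hφ : ContDiff ℝ 3 φ) (hφ0 : ∀ x, φ x ≠ 0)
    (hA : ∀ μ, ContDiff ℝ 2 (A μ)) (hm0 : m0 ≠ 0) (x : Fin 4 → ℝ) :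
    KGop hbar e A φ x = ((m0 : ℂ) * φ x) *
      ((m0 : ℂ) * ∑ ν : Fin 4, (mink ν : ℂ) *
          (VelPhi m0 hbar e φ A ν x * VelPhi m0 hbar e φ A ν x)
        + Complex.I * (hbar : ℂ) *
            ∑ ν : Fin 4, pdC ν (fun y => VelPhi m0 hbar e φ A ν y) x) := by
  have h := fun ν => KG_term (hbar := hbar) (e := e) hφ hφ0 hA hm0 ν x
  unfold KGop
  rw [Fin.sum_univ_four, h 0, h 1, h 2, h 3, Fin.sum_univ_four, Fin.sum_univ_four]
  ring

end Stmt17Aux5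
section Stmt17Aux6

open Complex Finset

variable {m0 hbar e : ℝ} {φ : (Fin 4 → ℝ) → ℂ} {A : Fin 4 → (Fin 4 → ℝ) → ℝ}

lemma pdC_rhs (hφ : ContDiff ℝ 3 φ) (hφ0 : ∀ x, φ x ≠ 0)
    (hA : ∀ μ, ContDiff ℝ 2 (A μ)) (hm0 : m0 ≠ 0) (μ : Fin 4) (x : Fin 4 → ℝ) :
    pdC μ (fun y => KGop hbar e A φ y / ((m0 : ℂ) * φ y)) x
      = (m0 : ℂ) * ∑ ν : Fin 4, (mink ν : ℂ) *
          (VelPhi m0 hbar e φ A ν x * pdC μ (fun y => VelPhi m0 hbar e φ A ν y) x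
            + VelPhi m0 hbar e φ A ν x * pdC μ (fun y => VelPhi m0 hbar e φ A ν y) x)
        + Complex.I * (hbar : ℂ) *
            ∑ ν : Fin 4, pdC μ (pdC ν (fun y => VelPhi m0 hbar e φ A ν y)) x := by
  have hm0' : (m0 : ℂ) ≠ 0 := Complex.ofReal_ne_zero.mpr hm0
  have key : ∀ y, KGop hbar e A φ y / ((m0 : ℂ) * φ y)
      = (m0 : ℂ) * ∑ ν : Fin 4, (mink ν : ℂ) *
            (VelPhi m0 hbar e φ A ν y * VelPhi m0 hbar e φ A ν y)
          + Complex.I * (hbar : ℂ) *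
              ∑ ν : Fin 4, pdC ν (fun z => VelPhi m0 hbar e φ A ν z) y := by
    intro y
    rw [KG_Vel hφ hφ0 hA hm0 y]
    exact mul_div_cancel_left₀ _ (mul_ne_zero hm0' (hφ0 y))
  have dV : ∀ ν : Fin 4, DifferentiableAt ℝ (fun y => VelPhi m0 hbar e φ A ν y) x :=
    fun ν => diff_Vel hφ hφ0 hA ν x
  have dVV : ∀ ν : Fin 4, DifferentiableAt ℝ
      (fun y => (mink ν : ℂ) * (VelPhi m0 hbar e φ A ν y * VelPhi m0 hbar e φ A ν y)) x :=
    fun ν => ((dV ν).mul (dV ν)).const_mul _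
  have dpV : ∀ ν : Fin 4, DifferentiableAt ℝ
      (pdC ν (fun z => VelPhi m0 hbar e φ A ν z)) x :=
    fun ν => diff_pdC_Vel hφ hφ0 hA ν ν x
  have dS1 : DifferentiableAt ℝ (fun y => ∑ ν : Fin 4, (mink ν : ℂ) *
      (VelPhi m0 hbar e φ A ν y * VelPhi m0 hbar e φ A ν y)) x :=
    DifferentiableAt.fun_sum fun ν _ => dVV ν
  have dS2 : DifferentiableAt ℝ (fun y => ∑ ν : Fin 4,
      pdC ν (fun z => VelPhi m0 hbar e φ A ν z) y) x :=
    DifferentiableAt.fun_sum fun ν _ => dpV ν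
  rw [pdC_congr key, pdC_add (dS1.const_mul _) (dS2.const_mul _),
    pdC_const_mul dS1, pdC_const_mul dS2,
    pdC_sum (fun ν => dVV ν), pdC_sum (fun ν => dpV ν)]
  congr 1
  congr 1
  apply Finset.sum_congr rfl
  intro ν _
  rw [pdC_const_mul ((dV ν).fun_mul (dV ν)), pdC_mul (dV ν) (dV ν)]

end Stmt17Aux6
/-- The stochastic dynamics equation implies the Klein–Gordon equation: with
`λ² = ℏ/m₀`, one has the pointwise identity
`m₀ D_τ V^μ + e V̂_ν F^{μν} = (1/2)∂^μ[(iℏ∂_ν + eA_ν)(iℏ∂^ν + eA^ν)φ/(m₀φ)]`;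
in particular, if `φ` satisfies the Klein–Gordon equation, then
`m₀ D_τ V^μ = −e V̂_ν F^{μν}`. -/
theorem stmt_17 (m0 hbar e c lam : ℝ) (hm0 : 0 < m0) (hhbar : 0 < hbar) (he : 0 < e)
    (hc : 0 < c) (hlam : lam ^ 2 = hbar / m0)
    (φ : (Fin 4 → ℝ) → ℂ) (hφ : ContDiff ℝ 3 φ) (hφ0 : ∀ x, φ x ≠ 0)
    (A : Fin 4 → (Fin 4 → ℝ) → ℝ) (hA : ∀ μ, ContDiff ℝ 2 (A μ)) :
    (∀ (μ : Fin 4) (x : Fin 4 → ℝ),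
      (m0 : ℂ) * Dtau m0 hbar e lam φ A (fun y => VelPhi m0 hbar e φ A μ y) x
        + (e : ℂ) * VhatF m0 hbar e lam φ A μ x
      = (1 / 2 : ℂ) * (mink μ : ℂ) *
          pdC μ (fun y => KGop hbar e A φ y / ((m0 : ℂ) * φ y)) x) ∧
    ((∀ x, KGop hbar e A φ x = ((m0 ^ 2 * c ^ 2 : ℝ) : ℂ) * φ x) →
      ∀ (μ : Fin 4) (x : Fin 4 → ℝ),
        (m0 : ℂ) * Dtau m0 hbar e lam φ A (fun y => VelPhi m0 hbar e φ A μ y) x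
          = -(e : ℂ) * VhatF m0 hbar e lam φ A μ x) := by
  have hm0' : (m0 : ℂ) ≠ 0 := Complex.ofReal_ne_zero.mpr hm0.ne'
  have he' : (e : ℂ) ≠ 0 := Complex.ofReal_ne_zero.mpr he.ne'
  have main : ∀ (μ : Fin 4) (x : Fin 4 → ℝ),
      (m0 : ℂ) * Dtau m0 hbar e lam φ A (fun y => VelPhi m0 hbar e φ A μ y) x
        + (e : ℂ) * VhatF m0 hbar e lam φ A μ x
      = (1 / 2 : ℂ) * (mink μ : ℂ) *
          pdC μ (fun y => KGop hbar e A φ y / ((m0 : ℂ) * φ y)) x := by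
    intro μ x
    have C : ∀ ν : Fin 4, (e : ℂ) * ((Ften A μ ν x : ℝ) : ℂ)
        = (m0 : ℂ) * ((mink μ : ℂ) * pdC μ (fun y => VelPhi m0 hbar e φ A ν y) x
            - (mink ν : ℂ) * pdC ν (fun y => VelPhi m0 hbar e φ A μ y) x) :=
      fun ν => curl_Vel hφ hφ0 hA hm0.ne' μ ν x
    have D : ∀ ν : Fin 4, (e : ℂ) * ((pdR ν (fun y => Ften A μ ν y) x : ℝ) : ℂ)
        = (m0 : ℂ) * ((mink μ : ℂ) *
              pdC μ (pdC ν (fun y => VelPhi m0 hbar e φ A ν y)) x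
            - (mink ν : ℂ) * pdC ν (pdC ν (fun y => VelPhi m0 hbar e φ A μ y)) x) :=
      fun ν => divF_Vel hφ hφ0 hA hm0.ne' μ ν x
    have M : ∀ ν : Fin 4, ((mink ν : ℝ) : ℂ) * ((mink ν : ℝ) : ℂ) = 1 := by
      intro ν
      rcases mink_cases ν with h | h <;> rw [h] <;> norm_num
    have H : (m0 : ℂ) * (lam : ℂ) ^ 2 = (hbar : ℂ) := by
      have : ((m0 * lam ^ 2 : ℝ) : ℂ) = ((hbar : ℝ) : ℂ) := by
        rw [hlam]
        norm_cast
        field_simp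
      push_cast at this
      linear_combination this
    rw [pdC_rhs hφ hφ0 hA hm0.ne' μ x]
    unfold Dtau VhatF boxC
    push_cast
    simp only [Fin.sum_univ_four]
    linear_combination
      ((mink 0 : ℝ) : ℂ) * (VelPhi m0 hbar e φ A 0 x) * C 0
      + ((mink 1 : ℝ) : ℂ) * (VelPhi m0 hbar e φ A 1 x) * C 1
      + ((mink 2 : ℝ) : ℂ) * (VelPhi m0 hbar e φ A 2 x) * C 2
      + ((mink 3 : ℝ) : ℂ) * (VelPhi m0 hbar e φ A 3 x) * C 3
      + Complex.I * (lam : ℂ) ^ 2 / 2 * (D 0 + D 1 + D 2 + D 3)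
      - (((m0 : ℂ) * (VelPhi m0 hbar e φ A 0 x) * (pdC 0 (fun y => VelPhi m0 hbar e φ A μ y) x))) * M 0
      - (((m0 : ℂ) * (VelPhi m0 hbar e φ A 1 x) * (pdC 1 (fun y => VelPhi m0 hbar e φ A μ y) x))) * M 1
      - (((m0 : ℂ) * (VelPhi m0 hbar e φ A 2 x) * (pdC 2 (fun y => VelPhi m0 hbar e φ A μ y) x))) * M 2
      - (((m0 : ℂ) * (VelPhi m0 hbar e φ A 3 x) * (pdC 3 (fun y => VelPhi m0 hbar e φ A μ y) x))) * M 3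
      + Complex.I / 2 * ((mink μ : ℝ) : ℂ) * (pdC μ (pdC 0 (fun y => VelPhi m0 hbar e φ A 0 y)) x + pdC μ (pdC 1 (fun y => VelPhi m0 hbar e φ A 1 y)) x + pdC μ (pdC 2 (fun y => VelPhi m0 hbar e φ A 2 y)) x + pdC μ (pdC 3 (fun y => VelPhi m0 hbar e φ A 3 y)) x) * H
  refine ⟨main, fun hKG μ x => ?_⟩
  have hconst : ∀ y, KGop hbar e A φ y / ((m0 : ℂ) * φ y) = ((m0 * c ^ 2 : ℝ) : ℂ) := by
    intro y
    rw [hKG y]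
    field_simp [hφ0 y]
    push_cast
    ring
  have hz : pdC μ (fun y => KGop hbar e A φ y / ((m0 : ℂ) * φ y)) x = 0 := by
    rw [pdC_congr hconst]
    exact pdC_const _
  have h := main μ x
  rw [hz, mul_zero] at h
  linear_combination h
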